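/- For every real y > 0, lim_{ε→0⁺} ε · ∑_{k=1}^{⌊y/ε⌋} log(1 − e^{−εk}) = Li₂(e^{−y}) − π²/6. Equivalently, writing q = e^{−ε} and (n)_q = ∏_{k=1}^{n}(1 − q^k), one has ε·log (⌊ε^{−1}y⌋)_q → Li₂(e^{−y}) − π²/6 as ε → 0⁺. -/

import Mathlib

/-- The dilogarithm `Li₂(x) = ∑_{n≥1} xⁿ/n²`. -/
noncomputable def dilog (x : ℝ) : ℝ := ∑' n : ℕ, x ^ (n + 1) / ((n : ℝ) + 1) ^ 2

open Filter Real


lemma geomIcc {r : ℝ} (hr : r ≠ 1) (N : ℕ) :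
    ∑ k ∈ Finset.Icc 1 N, r ^ k = (r - r ^ (N + 1)) / (1 - r) := by
  have h : ∑ k ∈ Finset.Icc 1 N, r ^ k = ∑ i ∈ Finset.range N, r * r ^ i := by
    rw [show Finset.Icc 1 N = Finset.Ico 1 (N+1) by rfl, Finset.sum_Ico_eq_sum_range]
    simp [pow_succ, pow_add, mul_comm]
  rw [h, ← Finset.mul_sum, geom_sum_eq hr]
  have h1 : r - 1 ≠ 0 := sub_ne_zero.mpr hr
  have h2 : (1:ℝ) - r ≠ 0 := sub_ne_zero.mpr (Ne.symm hr)
  field_simp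
  ring

lemma expdiv_le {x : ℝ} (hx : 0 < x) : Real.exp (-x) / (1 - Real.exp (-x)) ≤ 1 / x := by
  have h0 : 0 < 1 - Real.exp (-x) := by
    have := Real.exp_lt_one_iff.mpr (neg_lt_zero.mpr hx)
    linarith
  rw [div_le_div_iff₀ h0 hx]
  have h := Real.add_one_le_exp x
  have h2 : Real.exp (-x) * Real.exp x = 1 := by
    rw [← Real.exp_add]; simp
  nlinarith [Real.exp_pos (-x), Real.exp_pos x]

lemma tendsto_mul_floor (y : ℝ) (hy : 0 < y) :
    Tendsto (fun ε : ℝ => ε * (Nat.floor (y/ε) : ℝ)) (nhdsWithin 0 (Set.Ioi 0)) (nhds y) := by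
  apply tendsto_of_tendsto_of_tendsto_of_le_of_le' (g := fun ε : ℝ => y - ε) (h := fun _ => y)
  · simpa using (tendsto_const_nhds.sub (tendsto_nhdsWithin_of_tendsto_nhds tendsto_id) :
      Tendsto (fun ε : ℝ => y - ε) (nhdsWithin 0 (Set.Ioi 0)) (nhds (y - 0)))
  · exact tendsto_const_nhds
  · filter_upwards [self_mem_nhdsWithin] with ε (hε : 0 < ε)
    have h1 : y / ε - 1 < (Nat.floor (y/ε) : ℝ) := by
      have := Nat.sub_one_lt_floor (y/ε)
      linarith
    have := mul_lt_mul_of_pos_left h1 hε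
    rw [mul_sub, mul_div_cancel₀ _ hε.ne'] at this
    linarith
  · filter_upwards [self_mem_nhdsWithin] with ε (hε : 0 < ε)
    have h1 : (Nat.floor (y/ε) : ℝ) ≤ y / ε := Nat.floor_le (by positivity)
    calc ε * (Nat.floor (y/ε) : ℝ) ≤ ε * (y/ε) := by nlinarith
      _ = y := mul_div_cancel₀ _ hε.ne'

lemma tendsto_x_div_expm1 :
    Tendsto (fun x : ℝ => x / (Real.exp x - 1)) (nhdsWithin 0 (Set.Ioi 0)) (nhds 1) := by
  have h := (Real.hasDerivAt_exp 0).tendsto_slope_zero_right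
  simp only [Real.exp_zero, zero_add, smul_eq_mul] at h
  have h2 := (h.inv₀ one_ne_zero)
  simp only [inv_one] at h2
  refine h2.congr' ?_
  filter_upwards [self_mem_nhdsWithin] with x (hx : 0 < x)
  rw [mul_inv, inv_inv, div_eq_mul_inv]

noncomputable def fAux (y ε : ℝ) (n : ℕ) : ℝ :=
  -(ε/((n:ℝ)+1)) * ∑ k ∈ Finset.Icc 1 (Nat.floor (y/ε)), Real.exp (-(ε*((n:ℝ)+1)))^k

lemma sum_eq (y : ℝ) {ε : ℝ} (hε : 0 < ε) :
    ε * ∑ k ∈ Finset.Icc 1 (Nat.floor (y / ε)), Real.log (1 - Real.exp (-(ε * k)))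
      = ∑' n : ℕ, fAux y ε n := by
  set N := Nat.floor (y / ε)
  -- expand each log as a tsum
  have hx : ∀ k ∈ Finset.Icc 1 N, |Real.exp (-(ε * k))| < 1 := by
    intro k hk
    rw [abs_of_pos (Real.exp_pos _)]
    apply Real.exp_lt_one_iff.mpr
    have hk1 : 1 ≤ k := (Finset.mem_Icc.mp hk).1
    have : (1:ℝ) ≤ k := by exact_mod_cast hk1
    nlinarith
  have hlog : ∀ k ∈ Finset.Icc 1 N,
      ε * Real.log (1 - Real.exp (-(ε * k)))
        = ∑' n : ℕ, -ε * (Real.exp (-(ε * k)) ^ (n+1) / ((n:ℝ)+1)) := by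
    intro k hk
    have h := (hasSum_pow_div_log_of_abs_lt_one (hx k hk)).mul_left (-ε)
    rw [h.tsum_eq]
    push_cast
    ring
  rw [Finset.mul_sum, Finset.sum_congr rfl hlog, ← Summable.tsum_finsetSum]
  · congr 1
    ext n
    rw [fAux, Finset.mul_sum]
    congr 1
    ext k
    rw [← Real.exp_nat_mul, ← Real.exp_nat_mul]
    push_cast
    ring_nf
  · intro k hk
    exact (((hasSum_pow_div_log_of_abs_lt_one (hx k hk)).mul_left (-ε))).summable
lemma algId (c ε r E R : ℝ) (hrE : r * E = 1)
    (h1r : 1 - r ≠ 0) (hEm1 : E - 1 ≠ 0) (hc : c ≠ 0) :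
    -(1/c^2) * ((ε*c)/(E-1)) * (1 - R) = -(ε/c) * ((r - R*r)/(1-r)) := by
  field_simp
  linear_combination (-(ε*c*(r*(R-1)+c*(1-R))) - ε*c*r*(1-R) + ε*(1-R)*(c^2+1)) * hrE

lemma tendsto_fAux (y : ℝ) (hy : 0 < y) (n : ℕ) :
    Tendsto (fun ε => fAux y ε n) (nhdsWithin 0 (Set.Ioi 0))
      (nhds ((Real.exp (-(y*((n:ℝ)+1))) - 1)/((n:ℝ)+1)^2)) := by
  set c := (n:ℝ)+1 with hcdef
  have hc : 0 < c := by positivity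
  have hmap : Tendsto (fun ε : ℝ => ε * c) (nhdsWithin 0 (Set.Ioi 0)) (nhdsWithin 0 (Set.Ioi 0)) := by
    rw [tendsto_nhdsWithin_iff]
    constructor
    · have h : Tendsto (fun ε : ℝ => ε * c) (nhds 0) (nhds (0 * c)) := tendsto_id.mul_const c
      rw [zero_mul] at h
      exact h.mono_left nhdsWithin_le_nhds
    · filter_upwards [self_mem_nhdsWithin] with ε hε
      exact Set.mem_Ioi.mpr (mul_pos hε hc)
  have hA : Tendsto (fun ε : ℝ => (ε*c) / (Real.exp (ε*c) - 1)) (nhdsWithin 0 (Set.Ioi 0)) (nhds 1) :=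
    tendsto_x_div_expm1.comp hmap
  have hB : Tendsto (fun ε : ℝ => Real.exp (-(c * (ε * (Nat.floor (y/ε) : ℝ)))))
      (nhdsWithin 0 (Set.Ioi 0)) (nhds (Real.exp (-(c*y)))) := by
    exact (Real.continuous_exp.tendsto _).comp ((tendsto_mul_floor y hy).const_mul c).neg
  have hG : Tendsto (fun ε : ℝ => -(1/c^2) * ((ε*c)/(Real.exp (ε*c)-1))
        * (1 - Real.exp (-(c * (ε * (Nat.floor (y/ε) : ℝ))))))
      (nhdsWithin 0 (Set.Ioi 0)) (nhds (-(1/c^2) * 1 * (1 - Real.exp (-(c*y))))) :=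
    (tendsto_const_nhds.mul hA).mul (tendsto_const_nhds.sub hB)
  have heq : (fun ε : ℝ => -(1/c^2) * ((ε*c)/(Real.exp (ε*c)-1))
        * (1 - Real.exp (-(c * (ε * (Nat.floor (y/ε) : ℝ))))))
      =ᶠ[nhdsWithin 0 (Set.Ioi 0)] (fun ε => fAux y ε n) := by
    filter_upwards [self_mem_nhdsWithin] with ε (hε : 0 < ε)
    have hx : 0 < ε * c := mul_pos hε hc
    have hr1 : Real.exp (-(ε*c)) ≠ 1 := by
      rw [Ne, Real.exp_eq_one_iff]
      exact neg_ne_zero.mpr hx.ne'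
    have hpow : Real.exp (-(c * (ε * (Nat.floor (y/ε) : ℝ)))) = Real.exp (-(ε*c)) ^ (Nat.floor (y/ε)) := by
      rw [← Real.exp_nat_mul]
      congr 1
      ring
    rw [hpow, fAux, geomIcc hr1]
    have hrE : Real.exp (-(ε*c)) * Real.exp (ε*c) = 1 := by rw [← Real.exp_add]; simp
    have h1r : 1 - Real.exp (-(ε*c)) ≠ 0 := by
      have := Real.exp_lt_one_iff.mpr (neg_lt_zero.mpr hx)
      intro h; linarith [sub_eq_zero.mp h]
    have hEm1 : Real.exp (ε*c) - 1 ≠ 0 := by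
      have h1 : 1 < Real.exp (ε*c) := by
        rw [← Real.exp_zero]; exact Real.exp_lt_exp.mpr hx
      intro h; linarith [sub_eq_zero.mp h]
    rw [pow_succ]
    exact algId c ε _ _ _ hrE h1r hEm1 hc.ne'
  have hval : -(1/c^2) * 1 * (1 - Real.exp (-(c*y))) = (Real.exp (-(y*c)) - 1)/c^2 := by
    rw [mul_comm c y]; field_simp; ring
  rw [← hval]
  exact hG.congr' heq
lemma fAux_bound (y : ℝ) {ε : ℝ} (hε : 0 < ε) (n : ℕ) :
    ‖fAux y ε n‖ ≤ 1 / ((n:ℝ)+1)^2 := by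
  set c := (n:ℝ)+1 with hcdef
  have hc : 0 < c := by positivity
  have hx : 0 < ε * c := mul_pos hε hc
  set r := Real.exp (-(ε*c)) with hrdef
  have hr0 : 0 < r := Real.exp_pos _
  have hr1 : r < 1 := Real.exp_lt_one_iff.mpr (neg_lt_zero.mpr hx)
  set S := ∑ k ∈ Finset.Icc 1 (Nat.floor (y/ε)), r ^ k with hSdef
  have hS0 : 0 ≤ S := Finset.sum_nonneg fun k _ => pow_nonneg hr0.le k
  have hSle : S ≤ 1/(ε*c) := by
    have h1 : S = (r - r ^ (Nat.floor (y/ε) + 1)) / (1 - r) := geomIcc hr1.ne _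
    have h2 : (r - r ^ (Nat.floor (y/ε) + 1)) / (1 - r) ≤ r / (1-r) := by
      have hp : (0:ℝ) ≤ r ^ (Nat.floor (y/ε) + 1) := pow_nonneg hr0.le _
      gcongr
      · linarith
    calc S ≤ r / (1-r) := by rw [h1]; exact h2
      _ ≤ 1/(ε*c) := expdiv_le hx
  have hnorm : ‖fAux y ε n‖ = (ε/c) * S := by
    rw [fAux, Real.norm_eq_abs, abs_mul, abs_neg, abs_of_pos (by positivity), abs_of_nonneg hS0]
  rw [hnorm]
  calc (ε/c) * S ≤ (ε/c) * (1/(ε*c)) := by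
        apply mul_le_mul_of_nonneg_left hSle (by positivity)
    _ = 1/c^2 := by field_simp

lemma hasSum_zeta_shift : HasSum (fun n : ℕ => 1 / ((n:ℝ)+1)^2) (Real.pi^2/6) := by
  have h := (hasSum_nat_add_iff' (f := fun n : ℕ => 1/(n:ℝ)^2) 1).mpr hasSum_zeta_two
  simp only [Finset.range_one, Finset.sum_singleton, Nat.cast_zero] at h
  norm_num at h
  have he : (fun n : ℕ => 1/((n:ℝ)+1)^2) = fun n : ℕ => (((n:ℝ)+1)^2)⁻¹ := by
    funext n; rw [one_div]
  rw [he]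
  exact_mod_cast h

lemma summable_bound : Summable (fun n : ℕ => 1 / ((n:ℝ)+1)^2) := hasSum_zeta_shift.summable

lemma hasSum_limit (y : ℝ) (hy : 0 < y) :
    HasSum (fun n : ℕ => (Real.exp (-(y*((n:ℝ)+1))) - 1)/((n:ℝ)+1)^2)
      (dilog (Real.exp (-y)) - Real.pi ^ 2 / 6) := by
  have hx0 : (0:ℝ) < Real.exp (-y) := Real.exp_pos _
  have hx1 : Real.exp (-y) < 1 := Real.exp_lt_one_iff.mpr (neg_lt_zero.mpr hy)
  have hgeom : Summable (fun n : ℕ => Real.exp (-y) ^ (n+1)) := by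
    have := (summable_geometric_of_lt_one hx0.le hx1).mul_left (Real.exp (-y))
    refine this.congr fun n => ?_
    rw [pow_succ]
    ring
  have hsum : Summable (fun n : ℕ => Real.exp (-y) ^ (n+1) / ((n:ℝ)+1)^2) := by
    refine Summable.of_nonneg_of_le (fun n => by positivity) (fun n => ?_) hgeom
    apply div_le_self (by positivity)
    nlinarith [Nat.cast_nonneg (α := ℝ) n]
  have hd : HasSum (fun n : ℕ => Real.exp (-y) ^ (n+1) / ((n:ℝ)+1)^2) (dilog (Real.exp (-y))) := by
    rw [dilog]
    exact hsum.hasSum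
  have h := hd.sub hasSum_zeta_shift
  have he : (fun n : ℕ => (Real.exp (-(y*((n:ℝ)+1))) - 1)/((n:ℝ)+1)^2)
      = fun n : ℕ => Real.exp (-y) ^ (n+1) / ((n:ℝ)+1)^2 - 1 / ((n:ℝ)+1)^2 := by
    funext n
    rw [← Real.exp_nat_mul]
    push_cast
    ring_nf
  rw [he]
  exact h

theorem qfac_classical_limit (y : ℝ) (hy : 0 < y) :
    Filter.Tendsto
      (fun ε : ℝ =>
        ε * ∑ k ∈ Finset.Icc 1 (Nat.floor (y / ε)), Real.log (1 - Real.exp (-(ε * k))))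
      (nhdsWithin 0 (Set.Ioi 0))
      (nhds (dilog (Real.exp (-y)) - Real.pi ^ 2 / 6)) := by
  rw [← (hasSum_limit y hy).tsum_eq]
  have hmain := tendsto_tsum_of_dominated_convergence (𝓕 := nhdsWithin (0:ℝ) (Set.Ioi 0))
    (f := fun ε n => fAux y ε n) (g := fun n => (Real.exp (-(y*((n:ℝ)+1))) - 1)/((n:ℝ)+1)^2)
    (bound := fun n => 1/((n:ℝ)+1)^2) summable_bound (tendsto_fAux y hy)
    (by filter_upwards [self_mem_nhdsWithin] with ε (hε : 0 < ε)
        exact fun n => fAux_bound y hε n)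
  refine hmain.congr' ?_
  filter_upwards [self_mem_nhdsWithin] with ε (hε : 0 < ε)
  exact (sum_eq y hε).symm
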